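/- arXiv:1911.05822 — 3 statements merged into one kernel-verified Lean document; each statement's English description precedes it below -/
import Mathlib

section
/- Let r > 0, s ∈ (0, r], κ > 0, and let H, G, Z be i.i.d. standard Gaussian random variables with Y = Rad(f(sG + √(r² − s²) Z)). Define L̄(α, μ) = √(E[(αH + μGY − 1)_−²]) − α√κ for α ≥ 0, μ ∈ ℝ, and η(q, ρ) = E[(ρGY + H√(1 − ρ²) − 1/q)_−²] − (1 − ρ²)κ. Assume the separability condition κ > min_{t∈ℝ} E[(H + tGY)_−²], let q⋆ be the unique solution of min_{−1 ≤ ρ ≤ 1} η(q, ρ) = 0, and set k₀ = √(⌈(q⋆)²⌉ + 1). Then for every k ≥ k₀, the minimum of α² + μ² over the set {(α, μ) : α ≥ 0, α² + μ² ≤ k², L̄(α, μ) ≤ 0} equals (q⋆)². -/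
open MeasureTheory ProbabilityTheory Filter Set

/-- The sigmoid function `f(t) = (1 + e^{−t})⁻¹`. -/
noncomputable def sigmoid (t : ℝ) : ℝ := (1 + Real.exp (-t))⁻¹

/-- The negative part `(x)₋ = min x 0`. -/
noncomputable def negp (x : ℝ) : ℝ := min x 0

/-- The standard Gaussian measure on `ℝ`. -/
noncomputable def stdGaussian : Measure ℝ := gaussianReal 0 1

/-- `E[φ(H, GY)]` where `H, G, Z` are i.i.d. standard Gaussian and, conditionally on `(G,Z)`,
`Y = Rad(f(sG + √(r²−s²)Z))`: the expectation is computed by conditioning on `Y = ±1`. -/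
noncomputable def Elog (r s : ℝ) (φ : ℝ → ℝ → ℝ) : ℝ :=
  ∫ h, (∫ g, (∫ z,
      (sigmoid (s * g + Real.sqrt (r ^ 2 - s ^ 2) * z) * φ h g
        + (1 - sigmoid (s * g + Real.sqrt (r ^ 2 - s ^ 2) * z)) * φ h (-g))
    ∂stdGaussian) ∂stdGaussian) ∂stdGaussian

/-- `L̄(α, μ) = √(E[(αH + μGY − 1)₋²]) − α√κ`. -/
noncomputable def Lbar (r s κ α μ : ℝ) : ℝ :=
  Real.sqrt (Elog r s fun h v => (negp (α * h + μ * v - 1)) ^ 2) - α * Real.sqrt κ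

/-- `η(q, ρ) = E[(ρGY + H√(1−ρ²) − 1/q)₋²] − (1−ρ²)κ`. -/
noncomputable def etaLog (r s κ q ρ : ℝ) : ℝ :=
  (Elog r s fun h v => (negp (ρ * v + Real.sqrt (1 - ρ ^ 2) * h - 1 / q)) ^ 2)
    - (1 - ρ ^ 2) * κ

/-! ### Auxiliary lemmas -/

lemma sigmoid_nonneg' (t : ℝ) : 0 ≤ sigmoid t := by
  unfold sigmoid; positivity

lemma sigmoid_le_one' (t : ℝ) : sigmoid t ≤ 1 := by
  unfold sigmoid
  rw [inv_le_one_iff₀]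
  right; linarith [Real.exp_pos (-t)]

lemma continuous_sigmoid' : Continuous sigmoid := by
  unfold sigmoid
  apply Continuous.inv₀
  · fun_prop
  · intro t; positivity

instance : IsProbabilityMeasure _root_.stdGaussian := by
  unfold _root_.stdGaussian; infer_instance

lemma integrable_sq_stdGaussian : Integrable (fun x : ℝ => x ^ 2) stdGaussian := by
  rw [_root_.stdGaussian, gaussianReal_of_var_ne_zero 0 one_ne_zero]
  rw [integrable_withDensity_iff (measurable_gaussianPDF 0 1)
    (ae_of_all _ fun x => ENNReal.ofReal_lt_top)]
  have h2 : Integrable (fun x : ℝ => x ^ (2:ℝ) * Real.exp (-(1/2) * x ^ 2)) :=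
    integrable_rpow_mul_exp_neg_mul_sq (by norm_num) (by norm_num)
  have h2' : Integrable (fun x : ℝ => x ^ 2 * Real.exp (-(1/2) * x ^ 2)) := by
    convert h2 using 2 with x
    rw [← Real.rpow_natCast x 2]; norm_num
  have := h2'.const_mul ((Real.sqrt (2 * Real.pi))⁻¹)
  apply this.congr
  filter_upwards with x
  rw [gaussianPDF_def, ENNReal.toReal_ofReal (gaussianPDFReal_nonneg _ _ _),
    gaussianPDFReal_def]
  push_cast
  ring_nf

/-- `Pr r s g` = conditional probability that `Y = 1` given `G = g`. -/
noncomputable def Pr (r s g : ℝ) : ℝ :=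
  ∫ z, sigmoid (s * g + Real.sqrt (r ^ 2 - s ^ 2) * z) ∂stdGaussian

lemma integrable_sigmoid_comp (r s g : ℝ) :
    Integrable (fun z => sigmoid (s * g + Real.sqrt (r ^ 2 - s ^ 2) * z)) stdGaussian := by
  apply (integrable_const (1:ℝ)).mono'
  · exact (continuous_sigmoid'.comp (by fun_prop)).aestronglyMeasurable
  · filter_upwards with z
    rw [Real.norm_eq_abs, abs_of_nonneg (sigmoid_nonneg' _)]
    exact sigmoid_le_one' _

lemma Pr_nonneg (r s g : ℝ) : 0 ≤ Pr r s g :=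
  integral_nonneg fun z => sigmoid_nonneg' _

lemma Pr_le_one (r s g : ℝ) : Pr r s g ≤ 1 := by
  have : Pr r s g ≤ ∫ _z, (1:ℝ) ∂stdGaussian :=
    integral_mono (integrable_sigmoid_comp r s g) (integrable_const 1)
      (fun z => sigmoid_le_one' _)
  simpa using this

lemma Pr_continuous (r s : ℝ) : Continuous (Pr r s) := by
  apply continuous_of_dominated (bound := fun _ => (1:ℝ))
  · exact fun g => (continuous_sigmoid'.comp (by fun_prop)).aestronglyMeasurable
  · intro g
    filter_upwards with z
    rw [Real.norm_eq_abs, abs_of_nonneg (sigmoid_nonneg' _)]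
    exact sigmoid_le_one' _
  · exact integrable_const 1
  · filter_upwards with z
    exact continuous_sigmoid'.comp (by fun_prop)

lemma integral_sig (r s g A B : ℝ) :
    ∫ z, (sigmoid (s * g + Real.sqrt (r ^ 2 - s ^ 2) * z) * A
      + (1 - sigmoid (s * g + Real.sqrt (r ^ 2 - s ^ 2) * z)) * B) ∂stdGaussian
    = Pr r s g * A + (1 - Pr r s g) * B := by
  have h1 : (fun z => (sigmoid (s * g + Real.sqrt (r ^ 2 - s ^ 2) * z) * A
      + (1 - sigmoid (s * g + Real.sqrt (r ^ 2 - s ^ 2) * z)) * B))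
      = fun z => (A - B) * sigmoid (s * g + Real.sqrt (r ^ 2 - s ^ 2) * z) + B := by
    funext z; ring
  rw [h1, integral_add ((integrable_sigmoid_comp r s g).const_mul _) (integrable_const B),
    integral_const_mul, integral_const]
  simp [Pr]
  ring

lemma Elog_eq (r s : ℝ) (φ : ℝ → ℝ → ℝ) :
    Elog r s φ = ∫ h, (∫ g, (Pr r s g * φ h g + (1 - Pr r s g) * φ h (-g))
      ∂stdGaussian) ∂stdGaussian := by
  unfold Elog
  simp_rw [integral_sig]

/-! ### Pointwise lemmas about `negp` -/

lemma continuous_negp : Continuous negp := continuous_id.min continuous_const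

lemma negp_sq_le (x : ℝ) : (negp x) ^ 2 ≤ x ^ 2 := by
  unfold negp
  rcases le_total x 0 with h | h
  · rw [min_eq_left h]
  · rw [min_eq_right h]; simpa using sq_nonneg x

lemma negp_sq_anti {x y : ℝ} (h : x ≤ y) : (negp y) ^ 2 ≤ (negp x) ^ 2 := by
  unfold negp
  have h1 : min x 0 ≤ min y 0 := min_le_min h le_rfl
  have h2 : min y 0 ≤ 0 := min_le_right _ _
  nlinarith

lemma negp_mul {q x : ℝ} (hq : 0 ≤ q) : negp (q * x) = q * negp x := by
  unfold negp
  rcases le_total x 0 with h | h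
  · rw [min_eq_left h, min_eq_left (mul_nonpos_of_nonneg_of_nonpos hq h)]
  · rw [min_eq_right h, min_eq_right (mul_nonneg hq h), mul_zero]

lemma three_sq (x y z : ℝ) : (x + y + z) ^ 2 ≤ 3 * x ^ 2 + 3 * y ^ 2 + 3 * z ^ 2 := by
  nlinarith [sq_nonneg (x - y), sq_nonneg (x - z), sq_nonneg (y - z)]

/-! ### The kernel `Kf` and its integrals -/

noncomputable def Kf (r s a b c h g : ℝ) : ℝ :=
  Pr r s g * (negp (b * g + a * h - c)) ^ 2
    + (1 - Pr r s g) * (negp (b * (-g) + a * h - c)) ^ 2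

lemma Kf_nonneg (r s a b c h g : ℝ) : 0 ≤ Kf r s a b c h g := by
  unfold Kf
  have h0 := Pr_nonneg r s g
  have h1 : (0:ℝ) ≤ 1 - Pr r s g := by linarith [Pr_le_one r s g]
  positivity

lemma Kf_le (r s a b c h g : ℝ) :
    Kf r s a b c h g ≤ 3 * a ^ 2 * h ^ 2 + 3 * c ^ 2 + 3 * b ^ 2 * g ^ 2 := by
  have hb : ∀ g' : ℝ, g' ^ 2 = g ^ 2 →
      (negp (b * g' + a * h - c)) ^ 2 ≤ 3 * a ^ 2 * h ^ 2 + 3 * c ^ 2 + 3 * b ^ 2 * g ^ 2 := by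
    intro g' hg'
    refine (negp_sq_le _).trans ?_
    have := three_sq (b * g') (a * h) (-c)
    nlinarith [sq_nonneg g', sq_nonneg (b*g')]
  have h1 := hb g rfl
  have h2 := hb (-g) (by ring)
  have hp0 := Pr_nonneg r s g
  have hp1 := Pr_le_one r s g
  unfold Kf
  nlinarith [sq_nonneg (negp (b * g + a * h - c)), sq_nonneg (negp (b * (-g) + a * h - c))]

lemma Kf_continuous (r s a b c : ℝ) :
    Continuous (fun p : ℝ × ℝ => Kf r s a b c p.1 p.2) := by
  unfold Kf
  have := Pr_continuous r s
  have := continuous_negp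
  fun_prop

lemma integrable_Kf (r s a b c h : ℝ) :
    Integrable (fun g => Kf r s a b c h g) stdGaussian := by
  apply Integrable.mono' ((integrable_const (3 * a ^ 2 * h ^ 2 + 3 * c ^ 2)).add
    (integrable_sq_stdGaussian.const_mul (3 * b ^ 2)))
  · exact ((Kf_continuous r s a b c).comp
      (by fun_prop : Continuous fun g : ℝ => (h, g))).aestronglyMeasurable
  · filter_upwards with g
    rw [Real.norm_eq_abs, abs_of_nonneg (Kf_nonneg _ _ _ _ _ _ _)]
    simp only [Pi.add_apply]
    have := Kf_le r s a b c h g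
    linarith

noncomputable def M2 : ℝ := ∫ x, x ^ 2 ∂stdGaussian

lemma M2_nonneg : 0 ≤ M2 := integral_nonneg fun x => sq_nonneg x

lemma integral_aux (A B : ℝ) : ∫ x, (A + B * x ^ 2) ∂stdGaussian = A + B * M2 := by
  rw [integral_add (integrable_const A) (integrable_sq_stdGaussian.const_mul B),
    integral_const_mul, integral_const]
  simp [M2]

noncomputable def Jf (r s a b c h : ℝ) : ℝ := ∫ g, Kf r s a b c h g ∂stdGaussian

lemma Jf_nonneg (r s a b c h : ℝ) : 0 ≤ Jf r s a b c h :=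
  integral_nonneg fun g => Kf_nonneg _ _ _ _ _ _ _

lemma Jf_le (r s a b c h : ℝ) :
    |Jf r s a b c h| ≤ (3 * a ^ 2 * h ^ 2 + 3 * c ^ 2) + 3 * b ^ 2 * M2 := by
  have : ‖Jf r s a b c h‖
      ≤ ∫ g, ((3 * a ^ 2 * h ^ 2 + 3 * c ^ 2) + 3 * b ^ 2 * g ^ 2) ∂stdGaussian := by
    apply norm_integral_le_of_norm_le
    · exact (integrable_const _).add (integrable_sq_stdGaussian.const_mul _)
    · filter_upwards with g
      rw [Real.norm_eq_abs, abs_of_nonneg (Kf_nonneg _ _ _ _ _ _ _)]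
      have := Kf_le r s a b c h g
      linarith
  rwa [integral_aux, Real.norm_eq_abs] at this

lemma Jf_stronglyMeasurable (r s a b c : ℝ) :
    StronglyMeasurable (fun h => Jf r s a b c h) :=
  (Kf_continuous r s a b c).stronglyMeasurable.integral_prod_right'

lemma integrable_Jf (r s a b c : ℝ) : Integrable (Jf r s a b c) stdGaussian := by
  apply Integrable.mono' ((integrable_const (3 * c ^ 2 + 3 * b ^ 2 * M2)).add
    (integrable_sq_stdGaussian.const_mul (3 * a ^ 2)))
  · exact (Jf_stronglyMeasurable r s a b c).aestronglyMeasurable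
  · filter_upwards with h
    simp only [Pi.add_apply]
    have := Jf_le r s a b c h
    rw [Real.norm_eq_abs]
    linarith [abs_nonneg (Jf r s a b c h)]

/-! ### The function `Fc` -/

noncomputable def Fc (r s a b c : ℝ) : ℝ :=
  Elog r s (fun h v => (negp (b * v + a * h - c)) ^ 2)

lemma Fc_eq (r s a b c : ℝ) : Fc r s a b c = ∫ h, Jf r s a b c h ∂stdGaussian := by
  rw [Fc, Elog_eq]
  rfl

lemma Fc_nonneg (r s a b c : ℝ) : 0 ≤ Fc r s a b c := by
  rw [Fc_eq]
  exact integral_nonneg fun h => Jf_nonneg _ _ _ _ _ _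

lemma Fc_mono (r s a b : ℝ) {c c' : ℝ} (h : c ≤ c') : Fc r s a b c ≤ Fc r s a b c' := by
  rw [Fc_eq, Fc_eq]
  apply integral_mono (integrable_Jf r s a b c) (integrable_Jf r s a b c')
  intro hh
  apply integral_mono (integrable_Kf r s a b c hh) (integrable_Kf r s a b c' hh)
  intro g
  unfold Kf
  have hp0 := Pr_nonneg r s g
  have hp1 := Pr_le_one r s g
  have h1 : (negp (b * g + a * hh - c)) ^ 2 ≤ (negp (b * g + a * hh - c')) ^ 2 :=
    negp_sq_anti (by linarith)
  have h2 : (negp (b * (-g) + a * hh - c)) ^ 2 ≤ (negp (b * (-g) + a * hh - c')) ^ 2 :=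
    negp_sq_anti (by linarith)
  dsimp only
  nlinarith

lemma Fc_scale (r s a b c : ℝ) {q : ℝ} (hq : 0 ≤ q) :
    Fc r s (q * a) (q * b) (q * c) = q ^ 2 * Fc r s a b c := by
  unfold Fc Elog
  have key : ∀ h v : ℝ, (negp (q * b * v + q * a * h - q * c)) ^ 2
      = q ^ 2 * (negp (b * v + a * h - c)) ^ 2 := by
    intro h v
    rw [show q * b * v + q * a * h - q * c = q * (b * v + a * h - c) by ring, negp_mul hq]
    ring
  simp_rw [key]
  simp_rw [show ∀ (σ A B : ℝ), σ * (q ^ 2 * A) + (1 - σ) * (q ^ 2 * B)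
    = q ^ 2 * (σ * A + (1 - σ) * B) from fun σ A B => by ring]
  simp_rw [integral_const_mul]

lemma sqrt_sq_le_one (ρ : ℝ) : (Real.sqrt (1 - ρ ^ 2)) ^ 2 ≤ 1 := by
  have h1 : Real.sqrt (1 - ρ ^ 2) ≤ 1 := Real.sqrt_le_one.mpr (by nlinarith [sq_nonneg ρ])
  have h2 : 0 ≤ Real.sqrt (1 - ρ ^ 2) := Real.sqrt_nonneg _
  nlinarith

lemma Fc_path_continuous (r s c : ℝ) :
    Continuous fun ρ : ℝ => Fc r s (Real.sqrt (1 - ρ ^ 2)) ρ c := by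
  rw [continuous_iff_continuousAt]
  intro ρ₀
  simp only [Fc_eq]
  have hball : ∀ᶠ ρ : ℝ in nhds ρ₀, |ρ| ≤ |ρ₀| + 1 := by
    filter_upwards [Metric.ball_mem_nhds ρ₀ one_pos] with ρ hρ
    have := abs_sub_abs_le_abs_sub ρ ρ₀
    rw [Metric.mem_ball, Real.dist_eq] at hρ
    linarith
  have hb2 : ∀ ρ : ℝ, |ρ| ≤ |ρ₀| + 1 → ρ ^ 2 ≤ (|ρ₀| + 1) ^ 2 := by
    intro ρ hρ
    have := abs_nonneg ρ
    nlinarith [sq_abs ρ]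
  apply continuousAt_of_dominated
    (bound := fun h => 3 * h ^ 2 + (3 * c ^ 2 + 3 * (|ρ₀| + 1) ^ 2 * M2))
  · filter_upwards with ρ
    exact (Jf_stronglyMeasurable r s _ _ c).aestronglyMeasurable
  · filter_upwards [hball] with ρ hρ
    filter_upwards with h
    rw [Real.norm_eq_abs]
    have h1 := Jf_le r s (Real.sqrt (1 - ρ ^ 2)) ρ c h
    have h2 := sqrt_sq_le_one ρ
    have h3 := hb2 ρ hρ
    nlinarith [sq_nonneg h, M2_nonneg]
  · exact (integrable_sq_stdGaussian.const_mul 3).add (integrable_const _)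
  · filter_upwards with h
    apply continuousAt_of_dominated
      (bound := fun g => (3 * h ^ 2 + 3 * c ^ 2) + 3 * (|ρ₀| + 1) ^ 2 * g ^ 2)
    · filter_upwards with ρ
      exact ((Kf_continuous r s _ _ c).comp
        (Continuous.prodMk_right h)).aestronglyMeasurable
    · filter_upwards [hball] with ρ hρ
      filter_upwards with g
      rw [Real.norm_eq_abs, abs_of_nonneg (Kf_nonneg _ _ _ _ _ _ _)]
      have h1 := Kf_le r s (Real.sqrt (1 - ρ ^ 2)) ρ c h g
      have h2 := sqrt_sq_le_one ρ
      have h3 := hb2 ρ hρ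
      nlinarith [sq_nonneg h, sq_nonneg g]
    · exact (integrable_const _).add (integrable_sq_stdGaussian.const_mul _)
    · filter_upwards with g
      have : Continuous fun ρ : ℝ => Kf r s (Real.sqrt (1 - ρ ^ 2)) ρ c h g := by
        unfold Kf
        have h1 := continuous_negp
        have h2 : Continuous fun ρ : ℝ => Real.sqrt (1 - ρ ^ 2) := by fun_prop
        fun_prop
      exact this.continuousAt

/-! ### Relating `Lbar`, `etaLog` to `Fc` -/

lemma eta_eq (r s κ q ρ : ℝ) :
    etaLog r s κ q ρ = Fc r s (Real.sqrt (1 - ρ ^ 2)) ρ (1 / q) - (1 - ρ ^ 2) * κ := rfl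

lemma Lbar_eq (r s κ α μ : ℝ) :
    Lbar r s κ α μ = Real.sqrt (Fc r s α μ 1) - α * Real.sqrt κ := by
  unfold Lbar Fc
  have h1 : (fun h v => (negp (α * h + μ * v - 1)) ^ 2)
      = fun h v => (negp (μ * v + α * h - 1)) ^ 2 := by
    funext h v
    rw [show α * h + μ * v - 1 = μ * v + α * h - 1 by ring]
  rw [h1]

lemma Fc001 (r s : ℝ) : Fc r s 0 0 1 = 1 := by
  have hK : ∀ h g : ℝ, Kf r s 0 0 1 h g = 1 := by
    intro h g
    unfold Kf negp
    norm_num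
  have hJ : ∀ h : ℝ, Jf r s 0 0 1 h = 1 := by
    intro h
    unfold Jf
    simp_rw [hK]
    simp
  rw [Fc_eq]
  simp_rw [hJ]
  simp

set_option maxHeartbeats 2000000 in
/-- under the separability condition `κ > min_t E[(H + tGY)₋²]`, with `q⋆` the
unique positive solution of `min_{ρ∈[−1,1]} η(q, ρ) = 0` and `k₀ = √(⌈(q⋆)²⌉+1)`, for every
`k ≥ k₀` the minimum of `α² + μ²` over `{(α,μ) : α ≥ 0, α² + μ² ≤ k², L̄(α,μ) ≤ 0}` equals
`(q⋆)²`. -/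
theorem min_norm_sq_eq_qstar_sq (r s κ : ℝ) (hr : 0 < r) (hs : s ∈ Set.Ioc 0 r) (hκ : 0 < κ)
    (hsep : (⨅ t : ℝ, Elog r s fun h v => (negp (h + t * v)) ^ 2) < κ)
    (qstar : ℝ) (hq0 : 0 < qstar)
    (hqzero : (⨅ ρ : Set.Icc (-1 : ℝ) 1, etaLog r s κ qstar ρ) = 0)
    (hquniq : ∀ q : ℝ, 0 < q →
      (⨅ ρ : Set.Icc (-1 : ℝ) 1, etaLog r s κ q ρ) = 0 → q = qstar) :
    ∀ k : ℝ, Real.sqrt ((⌈qstar ^ 2⌉₊ : ℝ) + 1) ≤ k →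
      IsLeast {v : ℝ | ∃ α μ : ℝ, 0 ≤ α ∧ α ^ 2 + μ ^ 2 ≤ k ^ 2 ∧
        Lbar r s κ α μ ≤ 0 ∧ v = α ^ 2 + μ ^ 2} (qstar ^ 2) := by
  intro k hk
  haveI : Nonempty (Set.Icc (-1:ℝ) 1) := ⟨⟨0, by norm_num⟩⟩
  -- the infimum function and its basic properties
  set m : ℝ → ℝ := fun q => ⨅ ρ : Set.Icc (-1 : ℝ) 1, etaLog r s κ q ρ with hm
  have hbdd : ∀ q : ℝ, BddBelow (range fun ρ : Set.Icc (-1 : ℝ) 1 => etaLog r s κ q ρ) := by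
    intro q
    refine ⟨-κ, ?_⟩
    rintro x ⟨ρ, rfl⟩
    dsimp only
    rw [eta_eq]
    have h1 := Fc_nonneg r s (Real.sqrt (1 - (ρ:ℝ) ^ 2)) ρ (1 / q)
    nlinarith [sq_nonneg (ρ:ℝ)]
  have hanti : ∀ q₁ q₂ : ℝ, 0 < q₁ → q₁ ≤ q₂ → m q₂ ≤ m q₁ := by
    intro q₁ q₂ hq₁ hle
    apply ciInf_mono (hbdd q₂)
    intro ρ
    rw [eta_eq, eta_eq]
    have : 1 / q₂ ≤ 1 / q₁ := one_div_le_one_div_of_le hq₁ hle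
    have := Fc_mono r s (Real.sqrt (1 - (ρ:ℝ) ^ 2)) (ρ:ℝ) this
    linarith
  -- Key 1 : any feasible point has norm² ≥ qstar²
  have key1 : ∀ α μ : ℝ, 0 ≤ α → Lbar r s κ α μ ≤ 0 → qstar ^ 2 ≤ α ^ 2 + μ ^ 2 := by
    intro α μ hα hL
    rw [Lbar_eq] at hL
    have hT0 : 0 ≤ Fc r s α μ 1 := Fc_nonneg r s α μ 1
    have hακ : 0 ≤ α * Real.sqrt κ := mul_nonneg hα (Real.sqrt_nonneg _)
    have hTκ : Fc r s α μ 1 ≤ α ^ 2 * κ := by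
      have h1 : Real.sqrt (Fc r s α μ 1) ≤ α * Real.sqrt κ := by linarith
      have h2 := Real.sq_sqrt hT0
      have h3 := Real.sq_sqrt hκ.le
      nlinarith [Real.sqrt_nonneg (Fc r s α μ 1)]
    by_cases hzero : α ^ 2 + μ ^ 2 = 0
    · exfalso
      have hα0 : α = 0 := by nlinarith [sq_nonneg α, sq_nonneg μ]
      have hμ0 : μ = 0 := by nlinarith [sq_nonneg α, sq_nonneg μ]
      rw [hα0, hμ0] at hTκ
      rw [Fc001] at hTκ
      nlinarith
    · have hpos : 0 < α ^ 2 + μ ^ 2 :=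
        lt_of_le_of_ne (by positivity) (Ne.symm hzero)
      set q : ℝ := Real.sqrt (α ^ 2 + μ ^ 2) with hqdef
      have hqpos : 0 < q := Real.sqrt_pos.mpr hpos
      have hq2 : q ^ 2 = α ^ 2 + μ ^ 2 := Real.sq_sqrt hpos.le
      set ρ : ℝ := μ / q with hρdef
      have hρ2 : ρ ^ 2 + (α / q) ^ 2 = 1 := by
        rw [hρdef, div_pow, div_pow, ← add_div, hq2]
        field_simp
        ring
      have hρmem : ρ ∈ Set.Icc (-1 : ℝ) 1 := by
        constructor
        · nlinarith [sq_nonneg (α / q), sq_nonneg (ρ + 1)]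
        · nlinarith [sq_nonneg (α / q), sq_nonneg (ρ - 1)]
      have ha : Real.sqrt (1 - ρ ^ 2) = α / q := by
        rw [show 1 - ρ ^ 2 = (α / q) ^ 2 by linarith]
        exact Real.sqrt_sq (div_nonneg hα hqpos.le)
      have hscale : Fc r s α μ 1 = q ^ 2 * Fc r s (α / q) ρ (1 / q) := by
        rw [← Fc_scale r s (α / q) ρ (1 / q) hqpos.le]
        rw [mul_div_cancel₀ _ hqpos.ne', hρdef, mul_div_cancel₀ _ hqpos.ne',
          mul_one_div_cancel hqpos.ne']
      have hα2 : α ^ 2 = q ^ 2 * (1 - ρ ^ 2) := by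
        have h5 : (α / q) ^ 2 = 1 - ρ ^ 2 := by linarith
        have h6 : q ^ 2 * (α / q) ^ 2 = α ^ 2 := by field_simp
        rw [← h5, h6]
      have hq2pos : (0:ℝ) < q ^ 2 := by positivity
      have h7 : q ^ 2 * Fc r s (α / q) ρ (1 / q) ≤ q ^ 2 * ((1 - ρ ^ 2) * κ) := by
        calc q ^ 2 * Fc r s (α / q) ρ (1 / q) = Fc r s α μ 1 := hscale.symm
        _ ≤ α ^ 2 * κ := hTκ
        _ = q ^ 2 * ((1 - ρ ^ 2) * κ) := by rw [hα2]; ring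
      have h8 : Fc r s (α / q) ρ (1 / q) ≤ (1 - ρ ^ 2) * κ :=
        (mul_le_mul_iff_right₀ hq2pos).mp h7
      have heta : etaLog r s κ q ρ ≤ 0 := by
        rw [eta_eq, ha]
        linarith
      have hmq : m q ≤ 0 := by
        calc m q ≤ etaLog r s κ q ρ := ciInf_le (hbdd q) ⟨ρ, hρmem⟩
        _ ≤ 0 := heta
      -- conclude q ≥ qstar
      by_contra hcon
      push_neg at hcon
      have hqlt : q < qstar := by
        have : q ^ 2 < qstar ^ 2 := by rw [hq2]; exact hcon
        nlinarith
      have hmq0 : m qstar = 0 := hqzero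
      have hge : (0:ℝ) ≤ m q := by
        have := hanti q qstar hqpos hqlt.le
        rw [hmq0] at this
        linarith
      have : m q = 0 := le_antisymm hmq hge
      have := hquniq q hqpos this
      linarith
  -- Key 2 : existence of a minimiser ρ₀ of etaLog qstar on [-1,1] with value 0
  have hcont : Continuous fun ρ : ℝ => etaLog r s κ qstar ρ := by
    simp only [eta_eq]
    exact (Fc_path_continuous r s (1 / qstar)).sub (by fun_prop)
  obtain ⟨ρ₀, hρ₀mem, hρ₀min⟩ :=
    isCompact_Icc.exists_isMinOn (s := Set.Icc (-1:ℝ) 1) ⟨0, by norm_num⟩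
      hcont.continuousOn
  have hη₀ : etaLog r s κ qstar ρ₀ = 0 := by
    apply le_antisymm
    · rw [← hqzero]
      apply le_ciInf
      intro ρ
      exact hρ₀min ρ.2
    · rw [← hqzero]
      exact ciInf_le (hbdd qstar) ⟨ρ₀, hρ₀mem⟩
  have hρ₀2 : (0:ℝ) ≤ 1 - ρ₀ ^ 2 := by
    obtain ⟨h1, h2⟩ := hρ₀mem
    nlinarith
  set α₀ : ℝ := qstar * Real.sqrt (1 - ρ₀ ^ 2) with hα₀def
  set μ₀ : ℝ := qstar * ρ₀ with hμ₀def
  have hα₀ : 0 ≤ α₀ := mul_nonneg hq0.le (Real.sqrt_nonneg _)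
  have hsq : (Real.sqrt (1 - ρ₀ ^ 2)) ^ 2 = 1 - ρ₀ ^ 2 := Real.sq_sqrt hρ₀2
  have hnorm : α₀ ^ 2 + μ₀ ^ 2 = qstar ^ 2 := by
    rw [hα₀def, hμ₀def]
    rw [mul_pow, mul_pow, hsq]
    ring
  have hkk : qstar ^ 2 ≤ k ^ 2 := by
    have h1 : qstar ^ 2 ≤ (⌈qstar ^ 2⌉₊ : ℝ) := Nat.le_ceil _
    have h2 : (0:ℝ) ≤ (⌈qstar ^ 2⌉₊ : ℝ) + 1 := by positivity
    have h3 : Real.sqrt ((⌈qstar ^ 2⌉₊ : ℝ) + 1) ^ 2 = (⌈qstar ^ 2⌉₊ : ℝ) + 1 :=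
      Real.sq_sqrt h2
    have h4 : 0 ≤ Real.sqrt ((⌈qstar ^ 2⌉₊ : ℝ) + 1) := Real.sqrt_nonneg _
    nlinarith
  have hLb : Lbar r s κ α₀ μ₀ ≤ 0 := by
    rw [Lbar_eq]
    have hscale : Fc r s α₀ μ₀ 1 = qstar ^ 2 * Fc r s (Real.sqrt (1 - ρ₀ ^ 2)) ρ₀ (1 / qstar) := by
      rw [← Fc_scale r s (Real.sqrt (1 - ρ₀ ^ 2)) ρ₀ (1 / qstar) hq0.le,
        mul_one_div_cancel hq0.ne']
    have hFη : Fc r s (Real.sqrt (1 - ρ₀ ^ 2)) ρ₀ (1 / qstar) ≤ (1 - ρ₀ ^ 2) * κ := by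
      rw [eta_eq] at hη₀
      linarith
    have hFb : Fc r s α₀ μ₀ 1 ≤ α₀ ^ 2 * κ := by
      rw [hscale]
      have : α₀ ^ 2 = qstar ^ 2 * (1 - ρ₀ ^ 2) := by
        rw [hα₀def, mul_pow, hsq]
      rw [this]
      nlinarith [sq_nonneg qstar]
    have h1 : Real.sqrt (Fc r s α₀ μ₀ 1) ≤ Real.sqrt (α₀ ^ 2 * κ) :=
      Real.sqrt_le_sqrt hFb
    have h2 : Real.sqrt (α₀ ^ 2 * κ) = α₀ * Real.sqrt κ := by
      rw [Real.sqrt_mul (sq_nonneg _), Real.sqrt_sq hα₀]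
    linarith
  constructor
  · exact ⟨α₀, μ₀, hα₀, by rw [hnorm]; exact hkk, hLb, hnorm.symm⟩
  · rintro v ⟨α, μ, hα, _, hL, rfl⟩
    exact key1 α μ hα hL
end

section
/- Let κ > 0 with κ > min_{t∈ℝ} E[(H + tS)_−²], where H is standard Gaussian and S = GY with G standard Gaussian and Y ∈ {±1}. Define η(q, ρ) = E[(ρ S + H√(1 − ρ²) − 1/q)_−²] − (1 − ρ²)κ and let q⋆ be the unique zero of q ↦ min_{−1 ≤ ρ ≤ 1} η(q, ρ). Then the function ρ ↦ η(q⋆, ρ) admits a unique minimizer ρ⋆ on [−1, 1]. -/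
open MeasureTheory ProbabilityTheory Filter Set

/-- The standard Gaussian measure on `ℝ`. -/
noncomputable def stdGaussianR : Measure ℝ := gaussianReal 0 1

lemma negp_nonpos (x : ℝ) : negp x ≤ 0 := min_le_right _ _

lemma negp_const_mul {t : ℝ} (ht : 0 ≤ t) (x : ℝ) : negp (t * x) = t * negp x := by
  unfold negp
  rcases le_or_gt x 0 with h | h
  · rw [min_eq_left (by nlinarith), min_eq_left h]
  · rw [min_eq_right (by nlinarith), min_eq_right h.le, mul_zero]

lemma negp_eq_zero_iff {x : ℝ} : negp x = 0 ↔ 0 ≤ x := by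
  unfold negp
  constructor
  · intro h
    by_contra hc
    push_neg at hc
    rw [min_eq_left hc.le] at h
    exact hc.ne h
  · intro h; rw [min_eq_right h]

lemma negp_abs_midpoint (x y : ℝ) : |negp ((x + y) / 2)| ≤ (|negp x| + |negp y|) / 2 := by
  have hx : |negp x| = -(min x 0) := by rw [abs_of_nonpos (negp_nonpos x)]; rfl
  have hy : |negp y| = -(min y 0) := by rw [abs_of_nonpos (negp_nonpos y)]; rfl
  have hxy : |negp ((x + y) / 2)| = -(min ((x + y) / 2) 0) := by
    rw [abs_of_nonpos (negp_nonpos _)]; rfl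
  rw [hx, hy, hxy]
  rcases le_total x 0 with h1 | h1 <;> rcases le_total y 0 with h2 | h2 <;>
    rcases le_total ((x + y) / 2) 0 with h3 | h3 <;>
    simp only [min_eq_left, min_eq_right, h1, h2, h3] <;> linarith

lemma sq_le_one_of_Icc {ρ : ℝ} (h1 : -1 ≤ ρ) (h2 : ρ ≤ 1) : ρ ^ 2 ≤ 1 := by nlinarith

lemma negp_sq_le_three (x y d : ℝ) : (negp (x + y - d)) ^ 2 ≤ 3 * (x ^ 2 + y ^ 2 + d ^ 2) := by
  have h1 := negp_sq_le (x + y - d)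
  nlinarith [sq_nonneg (x - y), sq_nonneg (x + d), sq_nonneg (y + d)]

lemma negp_sq_le_three' {ρ t R : ℝ} (s h c : ℝ) (hρ : |ρ| ≤ R) (ht0 : 0 ≤ t) (ht1 : t ≤ 1) :
    (negp (ρ * s + t * h - c)) ^ 2 ≤ 3 * (R ^ 2 * s ^ 2 + h ^ 2 + c ^ 2) := by
  have h1 := negp_sq_le (ρ * s + t * h - c)
  have h2 : ρ ^ 2 ≤ R ^ 2 := by nlinarith [sq_abs ρ, abs_nonneg ρ]
  have h3 : ρ ^ 2 * s ^ 2 ≤ R ^ 2 * s ^ 2 := mul_le_mul_of_nonneg_right h2 (sq_nonneg s)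
  have h4 : t ^ 2 * h ^ 2 ≤ h ^ 2 := by
    have ht2 : t ^ 2 ≤ 1 := by nlinarith
    calc t ^ 2 * h ^ 2 ≤ 1 * h ^ 2 := mul_le_mul_of_nonneg_right ht2 (sq_nonneg h)
      _ = h ^ 2 := one_mul _
  nlinarith [sq_nonneg (ρ * s - t * h), sq_nonneg (ρ * s + c), sq_nonneg (t * h + c)]

lemma abs_eq_one_of_sq_eq_one {ρ : ℝ} (h : ρ ^ 2 = 1) : |ρ| = 1 := by
  rcases abs_cases ρ with ⟨h1, _⟩ | ⟨h1, _⟩ <;> nlinarith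

lemma pos_left_of_mul_pos {x y : ℝ} (h : 0 < x * y) (hy : 0 < y) : 0 < x := by
  by_contra hc
  push_neg at hc
  nlinarith

lemma midpoint_sq_lt {a1 b1 a2 b2 q : ℝ} (h1 : a1 ^ 2 + b1 ^ 2 = q ^ 2)
    (h2 : a2 ^ 2 + b2 ^ 2 = q ^ 2) (hD : 0 < (a1 - a2) ^ 2 + (b1 - b2) ^ 2) :
    ((a1 + a2) / 2) ^ 2 + ((b1 + b2) / 2) ^ 2 < q ^ 2 := by nlinarith

lemma lt_of_sq_lt_sq {a b : ℝ} (h : a ^ 2 < b ^ 2) (ha : 0 ≤ a) (hb : 0 < b) : a < b := by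
  nlinarith

lemma my_abs_le_of_sq_le_sq {a b : ℝ} (h : a ^ 2 ≤ b ^ 2) (hb : 0 ≤ b) : |a| ≤ b := by
  rcases abs_cases a with ⟨h1, _⟩ | ⟨h1, _⟩ <;> nlinarith

lemma abs_mul_abs_le_half (x y : ℝ) : |x| * |y| ≤ (1/2) * (x ^ 2 + y ^ 2) := by
  nlinarith [sq_nonneg (|x| - |y|), sq_abs x, sq_abs y]

lemma abs_mul_abs_le_weighted {lam : ℝ} (hl : 0 < lam) (x y : ℝ) :
    |x| * |y| ≤ (1/2) * (lam * x ^ 2 + lam⁻¹ * y ^ 2) := by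
  have h1 : 0 < lam⁻¹ := inv_pos.mpr hl
  have hA : 2 * lam * (|x| * |y|) ≤ lam ^ 2 * x ^ 2 + y ^ 2 := by
    nlinarith [sq_nonneg (lam * |x| - |y|), sq_abs x, sq_abs y]
  have hB := mul_le_mul_of_nonneg_left hA h1.le
  have hc1 : lam⁻¹ * (2 * lam * (|x| * |y|)) = 2 * (|x| * |y|) := by field_simp
  have hc2 : lam⁻¹ * (lam ^ 2 * x ^ 2 + y ^ 2) = lam * x ^ 2 + lam⁻¹ * y ^ 2 := by
    field_simp
  linarith

lemma negp_sq_midpoint (x y : ℝ) :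
    (negp ((x + y) / 2)) ^ 2 ≤ (1/2 * |negp x| + 1/2 * |negp y|) ^ 2 := by
  rw [← sq_abs (negp ((x + y) / 2))]
  apply pow_le_pow_left₀ (abs_nonneg _)
  have := negp_abs_midpoint x y
  linarith

lemma gaussian_pos {s : Set ℝ} (hs : MeasurableSet s) (h : 0 < volume s) :
    0 < stdGaussianR s := by
  unfold stdGaussianR
  rw [gaussianReal_of_var_ne_zero 0 one_ne_zero, withDensity_apply _ hs]
  rw [show (∫⁻ x in s, gaussianPDF 0 1 x) = ∫⁻ x, gaussianPDF 0 1 x ∂(volume.restrict s) from rfl]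
  rw [lintegral_pos_iff_support (measurable_gaussianPDF 0 1)]
  have hsupp : Function.support (gaussianPDF 0 1) = Set.univ := by
    ext x; simp [Function.mem_support, (gaussianPDF_pos 0 one_ne_zero x).ne']
  rw [hsupp, Measure.restrict_apply_univ]
  exact h

lemma integrable_sq_gaussian : Integrable (fun x : ℝ => x ^ 2) stdGaussianR := by
  unfold stdGaussianR
  rw [gaussianReal_of_var_ne_zero 0 one_ne_zero]
  rw [integrable_withDensity_iff (measurable_gaussianPDF 0 1)
    (ae_of_all _ fun x => ENNReal.ofReal_lt_top)]
  have heq : ∀ x : ℝ, x ^ 2 * (gaussianPDF 0 1 x).toReal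
      = (Real.sqrt (2 * Real.pi * 1))⁻¹ * (x ^ 2 * Real.exp (-(2⁻¹ : ℝ) * x ^ 2)) := by
    intro x
    rw [gaussianPDF_def, ENNReal.toReal_ofReal (gaussianPDFReal_nonneg _ _ _),
      gaussianPDFReal_def]
    push_cast
    ring_nf
  simp only [heq]
  apply Integrable.const_mul
  have h := integrable_rpow_mul_exp_neg_mul_sq (by norm_num : (0:ℝ) < 2⁻¹)
    (by norm_num : (-1:ℝ) < 2)
  have h2 : ∀ x : ℝ, x ^ (2:ℝ) = x ^ 2 := fun x => by
    rw [show (2:ℝ) = ((2:ℕ):ℝ) by norm_num, Real.rpow_natCast]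
  simpa [h2] using h

noncomputable def etaF {Ω : Type*} [MeasurableSpace Ω] (P : Measure Ω) (S H : Ω → ℝ)
    (κ q ρ : ℝ) : ℝ :=
  (∫ ω, (negp (ρ * S ω + Real.sqrt (1 - ρ ^ 2) * H ω - 1 / q)) ^ 2 ∂P) - (1 - ρ ^ 2) * κ

set_option maxHeartbeats 2000000 in
/-- under `κ > min_t E[(H + tS)₋²]`, with `q⋆` the unique zero of
`q ↦ min_{ρ∈[−1,1]} η(q, ρ)` on `(0,∞)`, the function `ρ ↦ η(q⋆, ρ)` admits a unique
minimizer `ρ⋆` on `[−1, 1]`, where `η(q, ρ) = E[(ρS + H√(1−ρ²) − 1/q)₋²] − (1−ρ²)κ`. -/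
theorem eta_unique_minimizer
    {Ω : Type*} [MeasurableSpace Ω] (P : Measure Ω) [IsProbabilityMeasure P]
    (κ : ℝ) (hκ : 0 < κ)
    (H G Y : Ω → ℝ)
    (hHm : Measurable H) (hGm : Measurable G) (hYm : Measurable Y)
    (hY : ∀ ω, Y ω = 1 ∨ Y ω = -1)
    (hH : Measure.map H P = stdGaussianR) (hG : Measure.map G P = stdGaussianR)
    (S : Ω → ℝ) (hS : S = fun ω => G ω * Y ω)
    (hindep : IndepFun S H P)
    (hdens : ∀ ρ ∈ Set.Icc (-1 : ℝ) 1, ∃ f : ℝ → ℝ, (∀ x, 0 < f x) ∧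
      Measure.map (fun ω => ρ * S ω + Real.sqrt (1 - ρ ^ 2) * H ω) P
        = (volume : Measure ℝ).withDensity fun x => ENNReal.ofReal (f x))
    (hsep : (⨅ t : ℝ, ∫ ω, (negp (H ω + t * S ω)) ^ 2 ∂P) < κ)
    (qstar : ℝ) (hq0 : 0 < qstar)
    (hqzero : (⨅ ρ : Set.Icc (-1 : ℝ) 1,
        ((∫ ω, (negp ((ρ : ℝ) * S ω + Real.sqrt (1 - (ρ : ℝ) ^ 2) * H ω - 1 / qstar)) ^ 2 ∂P)
          - (1 - (ρ : ℝ) ^ 2) * κ)) = 0)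
    (hquniq : ∀ q : ℝ, 0 < q →
      (⨅ ρ : Set.Icc (-1 : ℝ) 1,
        ((∫ ω, (negp ((ρ : ℝ) * S ω + Real.sqrt (1 - (ρ : ℝ) ^ 2) * H ω - 1 / q)) ^ 2 ∂P)
          - (1 - (ρ : ℝ) ^ 2) * κ)) = 0 → q = qstar) :
    ∃! ρstar : ℝ, ρstar ∈ Set.Icc (-1 : ℝ) 1 ∧
      ∀ ρ ∈ Set.Icc (-1 : ℝ) 1,
        ((∫ ω, (negp (ρstar * S ω + Real.sqrt (1 - ρstar ^ 2) * H ω - 1 / qstar)) ^ 2 ∂P)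
            - (1 - ρstar ^ 2) * κ)
          ≤ ((∫ ω, (negp (ρ * S ω + Real.sqrt (1 - ρ ^ 2) * H ω - 1 / qstar)) ^ 2 ∂P)
            - (1 - ρ ^ 2) * κ) := by
  clear hdens hsep
  have hqzero' : (⨅ ρ : Set.Icc (-1 : ℝ) 1, etaF P S H κ qstar ρ) = 0 := hqzero
  have hquniq' : ∀ q : ℝ, 0 < q →
      (⨅ ρ : Set.Icc (-1 : ℝ) 1, etaF P S H κ q ρ) = 0 → q = qstar := hquniq
  clear hqzero hquniq
  haveI : Nonempty (Set.Icc (-1 : ℝ) 1) := ⟨⟨0, by norm_num⟩⟩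
  have hSm : Measurable S := by rw [hS]; exact hGm.mul hYm
  have hSsq : ∀ ω, S ω ^ 2 = G ω ^ 2 := by
    intro ω; rw [hS]; rcases hY ω with h | h <;> simp [h] <;> ring
  have hSabs : ∀ ω, |S ω| = |G ω| := by
    intro ω; rw [hS]; rcases hY ω with h | h <;> simp [h, abs_mul]
  have hG2 : Integrable (fun ω => G ω ^ 2) P := by
    have h1 : Integrable (fun x : ℝ => x ^ 2) (Measure.map G P) := by
      rw [hG]; exact integrable_sq_gaussian
    rwa [integrable_map_measure (by fun_prop) hGm.aemeasurable] at h1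
  have hH2 : Integrable (fun ω => H ω ^ 2) P := by
    have h1 : Integrable (fun x : ℝ => x ^ 2) (Measure.map H P) := by
      rw [hH]; exact integrable_sq_gaussian
    rwa [integrable_map_measure (by fun_prop) hHm.aemeasurable] at h1
  have hS2 : Integrable (fun ω => S ω ^ 2) P :=
    hG2.congr (ae_of_all _ fun ω => (hSsq ω).symm)
  have hmeas : ∀ a b d : ℝ, Measurable (fun ω => (negp (a * S ω + b * H ω - d)) ^ 2) := by
    intro a b d
    exact ((((hSm.const_mul a).add (hHm.const_mul b)).sub measurable_const).min
      measurable_const).pow_const 2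
  have hint : ∀ a b d : ℝ, Integrable (fun ω => (negp (a * S ω + b * H ω - d)) ^ 2) P := by
    intro a b d
    refine Integrable.mono' (g := fun ω => 3 * (a ^ 2 * S ω ^ 2 + b ^ 2 * H ω ^ 2 + d ^ 2))
      ?_ (hmeas a b d).aestronglyMeasurable (ae_of_all _ fun ω => ?_)
    · exact (((hS2.const_mul _).add (hH2.const_mul _)).add (integrable_const _)).const_mul 3
    · rw [Real.norm_of_nonneg (sq_nonneg _)]
      show negp (a * S ω + b * H ω - d) ^ 2 ≤ 3 * (a ^ 2 * S ω ^ 2 + b ^ 2 * H ω ^ 2 + d ^ 2)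
      calc negp (a * S ω + b * H ω - d) ^ 2
          ≤ 3 * ((a * S ω) ^ 2 + (b * H ω) ^ 2 + d ^ 2) := negp_sq_le_three _ _ _
        _ = 3 * (a ^ 2 * S ω ^ 2 + b ^ 2 * H ω ^ 2 + d ^ 2) := by ring
  -- integrability specialized to the eta-shape integrand
  have hintE : ∀ q ρ : ℝ,
      Integrable (fun ω => (negp (ρ * S ω + Real.sqrt (1 - ρ ^ 2) * H ω - 1 / q)) ^ 2) P :=
    fun q ρ => hint ρ (Real.sqrt (1 - ρ ^ 2)) (1 / q)
  -- scaling identity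
  have hscale : ∀ q : ℝ, 0 < q → ∀ ρ : ℝ,
      (∫ ω, (negp (ρ * S ω + Real.sqrt (1 - ρ ^ 2) * H ω - 1 / q)) ^ 2 ∂P)
        = (1 / q ^ 2) *
          ∫ ω, (negp ((q * ρ) * S ω + (q * Real.sqrt (1 - ρ ^ 2)) * H ω - 1)) ^ 2 ∂P := by
    intro q hq ρ
    rw [← integral_const_mul]
    apply integral_congr_ae
    apply ae_of_all
    intro ω
    dsimp only
    have harg : ρ * S ω + Real.sqrt (1 - ρ ^ 2) * H ω - 1 / q
        = (1 / q) * ((q * ρ) * S ω + (q * Real.sqrt (1 - ρ ^ 2)) * H ω - 1) := by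
      field_simp
    rw [harg, negp_const_mul (by positivity)]
    rw [mul_pow]
    ring_nf
  -- lower bound / bddBelow
  have hEnn : ∀ q ρ : ℝ,
      0 ≤ ∫ ω, (negp (ρ * S ω + Real.sqrt (1 - ρ ^ 2) * H ω - 1 / q)) ^ 2 ∂P :=
    fun q ρ => integral_nonneg fun ω => sq_nonneg _
  have hlb : ∀ q : ℝ, ∀ ρ : Set.Icc (-1 : ℝ) 1, -κ ≤ etaF P S H κ q ρ := by
    intro q ρ
    have h1 := hEnn q ρ
    have h2 : (ρ : ℝ) ^ 2 ≤ 1 := by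
      have := ρ.2.1; have := ρ.2.2; nlinarith
    have h3 : (1 - (ρ:ℝ) ^ 2) * κ ≤ κ := by nlinarith
    unfold etaF; linarith
  have hBdd : ∀ q : ℝ, BddBelow (Set.range fun ρ : Set.Icc (-1 : ℝ) 1 => etaF P S H κ q ρ) := by
    intro q
    refine ⟨-κ, ?_⟩
    rintro x ⟨ρ, rfl⟩
    exact hlb q ρ
  have hnonnegstar : ∀ ρ : Set.Icc (-1 : ℝ) 1, 0 ≤ etaF P S H κ qstar ρ := by
    intro ρ
    have := ciInf_le (hBdd qstar) ρ
    rw [hqzero'] at this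
    exact this
  -- monotonicity in q
  have hmono : ∀ q' : ℝ, 0 < q' → q' ≤ qstar → ∀ ρ : ℝ,
      etaF P S H κ qstar ρ ≤ etaF P S H κ q' ρ := by
    intro q' hq' hle ρ
    unfold etaF
    have h1 : 1 / qstar ≤ 1 / q' := one_div_le_one_div_of_le hq' hle
    have h2 : (∫ ω, (negp (ρ * S ω + Real.sqrt (1 - ρ ^ 2) * H ω - 1 / qstar)) ^ 2 ∂P)
        ≤ ∫ ω, (negp (ρ * S ω + Real.sqrt (1 - ρ ^ 2) * H ω - 1 / q')) ^ 2 ∂P := by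
      apply integral_mono (hintE qstar ρ) (hintE q' ρ)
      intro ω
      exact negp_sq_anti (by linarith)
    linarith
  -- positivity of the integral for every admissible (q, ρ)
  have hpos : ∀ q : ℝ, 0 < q → ∀ ρ ∈ Set.Icc (-1:ℝ) 1,
      0 < ∫ ω, (negp (ρ * S ω + Real.sqrt (1 - ρ ^ 2) * H ω - 1 / q)) ^ 2 ∂P := by
    intro q hq ρ hρ
    have hc : 0 < 1 / q := by positivity
    have hρ2 : ρ ^ 2 ≤ 1 := sq_le_one_of_Icc hρ.1 hρ.2
    have ht0 : 0 ≤ Real.sqrt (1 - ρ ^ 2) := Real.sqrt_nonneg _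
    have hev : 0 < P {ω | ρ * S ω + Real.sqrt (1 - ρ ^ 2) * H ω - 1 / q < 0} := by
      rcases eq_or_lt_of_le ht0 with ht | ht
      · -- degenerate case: ρ = ±1
        have hρ1 : ρ ^ 2 = 1 := by
          by_contra hne'
          have h2 : 0 < 1 - ρ ^ 2 := lt_of_le_of_ne (by linarith)
            (fun hh => hne' (by linarith))
          exact absurd (Real.sqrt_pos.mpr h2) (by rw [← ht]; exact lt_irrefl 0)
        have habsρ : |ρ| = 1 := abs_eq_one_of_sq_eq_one hρ1
        have hsub : G ⁻¹' (Set.Ioo (-(1/q)) (1/q)) ⊆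
            {ω | ρ * S ω + Real.sqrt (1 - ρ ^ 2) * H ω - 1 / q < 0} := by
          intro ω hω
          simp only [Set.mem_preimage, Set.mem_Ioo] at hω
          have h3 : |G ω| < 1 / q := abs_lt.mpr ⟨hω.1, hω.2⟩
          have h4 : ρ * S ω ≤ |G ω| := by
            calc ρ * S ω ≤ |ρ * S ω| := le_abs_self _
              _ = |ρ| * |S ω| := abs_mul _ _
              _ = |G ω| := by rw [habsρ, one_mul, hSabs]
          simp only [Set.mem_setOf_eq, ← ht]
          linarith
        refine lt_of_lt_of_le ?_ (measure_mono hsub)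
        have h5 : P (G ⁻¹' (Set.Ioo (-(1/q)) (1/q))) = stdGaussianR (Set.Ioo (-(1/q)) (1/q)) := by
          rw [← hG, Measure.map_apply hGm measurableSet_Ioo]
        rw [h5]
        apply gaussian_pos measurableSet_Ioo
        rw [Real.volume_Ioo]
        apply ENNReal.ofReal_pos.mpr
        linarith
      · -- nondegenerate case: use independence
        set t := Real.sqrt (1 - ρ ^ 2) with ht_def
        set h₀ : ℝ := (1/q - 1)/t with hh₀_def
        have habsρ : |ρ| ≤ 1 := abs_le.mpr ⟨hρ.1, hρ.2⟩
        have hsub : (S ⁻¹' (Set.Icc (-1:ℝ) 1)) ∩ (H ⁻¹' (Set.Iio h₀)) ⊆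
            {ω | ρ * S ω + t * H ω - 1 / q < 0} := by
          rintro ω ⟨hω1, hω2⟩
          simp only [Set.mem_preimage, Set.mem_Icc] at hω1
          simp only [Set.mem_preimage, Set.mem_Iio] at hω2
          have h3 : |S ω| ≤ 1 := abs_le.mpr ⟨hω1.1, hω1.2⟩
          have h4 : ρ * S ω ≤ 1 := by
            calc ρ * S ω ≤ |ρ * S ω| := le_abs_self _
              _ = |ρ| * |S ω| := abs_mul _ _
              _ ≤ 1 := mul_le_one₀ habsρ (abs_nonneg _) h3
          have h5 : t * H ω < t * h₀ := by
            exact mul_lt_mul_of_pos_left hω2 ht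
          have h6 : t * h₀ = 1/q - 1 := by
            rw [hh₀_def]; field_simp
          simp only [Set.mem_setOf_eq]
          linarith
        refine lt_of_lt_of_le ?_ (measure_mono hsub)
        rw [hindep.measure_inter_preimage_eq_mul _ _ measurableSet_Icc measurableSet_Iio]
        have hPA : P (S ⁻¹' (Set.Icc (-1:ℝ) 1)) = stdGaussianR (Set.Icc (-1:ℝ) 1) := by
          have hset : S ⁻¹' (Set.Icc (-1:ℝ) 1) = G ⁻¹' (Set.Icc (-1:ℝ) 1) := by
            ext ω
            simp only [Set.mem_preimage, Set.mem_Icc, ← abs_le, hSabs ω]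
          rw [hset, ← hG, Measure.map_apply hGm measurableSet_Icc]
        have hPB : P (H ⁻¹' (Set.Iio h₀)) = stdGaussianR (Set.Iio h₀) := by
          rw [← hH, Measure.map_apply hHm measurableSet_Iio]
        rw [hPA, hPB]
        apply ENNReal.mul_pos
        · refine (gaussian_pos measurableSet_Icc ?_).ne'
          rw [Real.volume_Icc]
          exact ENNReal.ofReal_pos.mpr (by norm_num)
        · refine (gaussian_pos measurableSet_Iio ?_).ne'
          rw [Real.volume_Iio]
          exact (by simp : (0:ENNReal) < ⊤)
    rw [integral_pos_iff_support_of_nonneg_ae (ae_of_all _ fun ω => sq_nonneg _) (hintE q ρ)]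
    refine lt_of_lt_of_le hev (measure_mono ?_)
    intro ω hω
    simp only [Set.mem_setOf_eq] at hω
    simp only [Function.mem_support]
    intro hzero
    have h7 : negp (ρ * S ω + Real.sqrt (1 - ρ ^ 2) * H ω - 1 / q) = 0 :=
      (pow_eq_zero_iff two_ne_zero).mp hzero
    have h8 := negp_eq_zero_iff.mp h7
    linarith
  -- continuity in ρ
  have hcont : Continuous (fun ρ : ℝ => etaF P S H κ qstar ρ) := by
    have hcontE : Continuous (fun ρ : ℝ =>
        ∫ ω, (negp (ρ * S ω + Real.sqrt (1 - ρ ^ 2) * H ω - 1 / qstar)) ^ 2 ∂P) := by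
      rw [continuous_iff_continuousAt]
      intro ρ₀
      apply continuousAt_of_dominated
        (bound := fun ω => 3 * ((|ρ₀| + 1) ^ 2 * S ω ^ 2 + H ω ^ 2 + (1/qstar) ^ 2))
      · exact Eventually.of_forall fun ρ =>
          (hmeas ρ (Real.sqrt (1 - ρ ^ 2)) (1/qstar)).aestronglyMeasurable
      · filter_upwards [Metric.ball_mem_nhds ρ₀ one_pos] with ρ hρ
        apply ae_of_all
        intro ω
        rw [Real.norm_of_nonneg (sq_nonneg _)]
        have hρ' : |ρ| ≤ |ρ₀| + 1 := by
          have h2 := abs_sub_abs_le_abs_sub ρ ρ₀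
          have h3 : |ρ - ρ₀| < 1 := by
            rw [Metric.mem_ball, Real.dist_eq] at hρ; exact hρ
          linarith
        have hsq1 : Real.sqrt (1 - ρ ^ 2) ≤ 1 := Real.sqrt_le_one.mpr (by nlinarith [sq_nonneg ρ])
        exact negp_sq_le_three' (S ω) (H ω) (1/qstar) hρ' (Real.sqrt_nonneg _) hsq1
      · exact (((hS2.const_mul _).add hH2).add (integrable_const _)).const_mul 3
      · apply ae_of_all
        intro ω
        apply Continuous.continuousAt
        have : Continuous (fun ρ : ℝ => ρ * S ω + Real.sqrt (1 - ρ ^ 2) * H ω - 1/qstar) := by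
          fun_prop
        unfold negp
        fun_prop
    unfold etaF
    fun_prop
  -- minimizers have value zero
  have hval : ∀ ρ₁ ∈ Set.Icc (-1:ℝ) 1,
      (∀ ρ ∈ Set.Icc (-1:ℝ) 1, etaF P S H κ qstar ρ₁ ≤ etaF P S H κ qstar ρ) →
      etaF P S H κ qstar ρ₁ = 0 := by
    intro ρ₁ h1 hm
    refine le_antisymm ?_ (hnonnegstar ⟨ρ₁, h1⟩)
    rw [← hqzero']
    exact le_ciInf fun ρ => hm ρ ρ.2
  -- main uniqueness step
  have huniq : ∀ ρ₁ ∈ Set.Icc (-1:ℝ) 1,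
      (∀ ρ ∈ Set.Icc (-1:ℝ) 1, etaF P S H κ qstar ρ₁ ≤ etaF P S H κ qstar ρ) →
      ∀ ρ₂ ∈ Set.Icc (-1:ℝ) 1,
      (∀ ρ ∈ Set.Icc (-1:ℝ) 1, etaF P S H κ qstar ρ₂ ≤ etaF P S H κ qstar ρ) →
      ρ₂ = ρ₁ := by
    intro ρ₁ h1 hm1 ρ₂ h2 hm2
    by_contra hne
    -- both have value 0, and both are interior, with the J-value identity
    have hJval : ∀ ρ ∈ Set.Icc (-1:ℝ) 1, etaF P S H κ qstar ρ = 0 →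
        0 < Real.sqrt (1 - ρ ^ 2) ∧
        (∫ ω, (negp ((qstar * ρ) * S ω + (qstar * Real.sqrt (1 - ρ ^ 2)) * H ω - 1)) ^ 2 ∂P)
          = κ * (qstar * Real.sqrt (1 - ρ ^ 2)) ^ 2 := by
      intro ρ hρ hz
      have hE := hscale qstar hq0 ρ
      have hρ2 : ρ ^ 2 ≤ 1 := sq_le_one_of_Icc hρ.1 hρ.2
      have hsq : (Real.sqrt (1 - ρ ^ 2)) ^ 2 = 1 - ρ ^ 2 := Real.sq_sqrt (by linarith)
      have hpos' := hpos qstar hq0 ρ hρ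
      have hEq : (∫ ω, (negp (ρ * S ω + Real.sqrt (1 - ρ ^ 2) * H ω - 1 / qstar)) ^ 2 ∂P)
          = (1 - ρ ^ 2) * κ := by
        unfold etaF at hz; linarith
      have h12 : 0 < 1 - ρ ^ 2 := pos_left_of_mul_pos (hEq ▸ hpos') hκ
      refine ⟨Real.sqrt_pos.mpr h12, ?_⟩
      have h3 : (1 / qstar ^ 2) *
          (∫ ω, (negp ((qstar * ρ) * S ω + (qstar * Real.sqrt (1 - ρ ^ 2)) * H ω - 1)) ^ 2 ∂P)
          = (1 - ρ ^ 2) * κ := by rw [← hE]; exact hEq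
      have hq2 : (0:ℝ) < qstar ^ 2 := by positivity
      rw [mul_pow, hsq]
      rw [one_div, inv_mul_eq_iff_eq_mul₀ hq2.ne'] at h3
      rw [h3]; ring
    have hz1 := hval ρ₁ h1 hm1
    have hz2 := hval ρ₂ h2 hm2
    obtain ⟨ht1, hJ1⟩ := hJval ρ₁ h1 hz1
    obtain ⟨ht2, hJ2⟩ := hJval ρ₂ h2 hz2
    set a1 := qstar * ρ₁ with ha1
    set b1 := qstar * Real.sqrt (1 - ρ₁ ^ 2) with hb1
    set a2 := qstar * ρ₂ with ha2
    set b2 := qstar * Real.sqrt (1 - ρ₂ ^ 2) with hb2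
    have hb1p : 0 < b1 := by rw [hb1]; exact mul_pos hq0 ht1
    have hb2p : 0 < b2 := by rw [hb2]; exact mul_pos hq0 ht2
    have hρ12 : ρ₁ ^ 2 ≤ 1 := sq_le_one_of_Icc h1.1 h1.2
    have hρ22 : ρ₂ ^ 2 ≤ 1 := sq_le_one_of_Icc h2.1 h2.2
    have hsq1 : (Real.sqrt (1 - ρ₁ ^ 2)) ^ 2 = 1 - ρ₁ ^ 2 := Real.sq_sqrt (by linarith)
    have hsq2 : (Real.sqrt (1 - ρ₂ ^ 2)) ^ 2 = 1 - ρ₂ ^ 2 := Real.sq_sqrt (by linarith)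
    have hcirc1 : a1 ^ 2 + b1 ^ 2 = qstar ^ 2 := by
      rw [ha1, hb1, mul_pow, mul_pow, hsq1]; ring
    have hcirc2 : a2 ^ 2 + b2 ^ 2 = qstar ^ 2 := by
      rw [ha2, hb2, mul_pow, mul_pow, hsq2]; ring
    set am := (a1 + a2) / 2 with ham
    set bm := (b1 + b2) / 2 with hbm
    have hbmp : 0 < bm := by rw [hbm]; linarith
    set q' := Real.sqrt (am ^ 2 + bm ^ 2) with hq'def
    have hq'pos : 0 < q' := Real.sqrt_pos.mpr (by linarith [sq_nonneg am, pow_pos hbmp 2])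
    have hq'sq : q' ^ 2 = am ^ 2 + bm ^ 2 := Real.sq_sqrt (by positivity)
    clear_value a1 b1 a2 b2 am bm q'
    have hane : a1 ≠ a2 := by
      intro hh
      exact hne (mul_left_cancel₀ hq0.ne' (by rw [← ha1, ← ha2, hh])).symm
    have hD : 0 < (a1 - a2) ^ 2 + (b1 - b2) ^ 2 := by
      have h3 : a1 - a2 ≠ 0 := sub_ne_zero.mpr hane
      linarith [sq_nonneg (b1 - b2), pow_two_pos_of_ne_zero h3]
    have hmidlt : am ^ 2 + bm ^ 2 < qstar ^ 2 := by
      rw [ham, hbm]; exact midpoint_sq_lt hcirc1 hcirc2 hD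
    have hlt : q' < qstar := lt_of_sq_lt_sq (by rw [hq'sq]; exact hmidlt) hq'pos.le hq0
    set ρm := am / q' with hρm_def
    have hamsq : am ^ 2 ≤ q' ^ 2 := by linarith [sq_nonneg bm, hq'sq]
    have habs_am : |am| ≤ q' := my_abs_le_of_sq_le_sq hamsq hq'pos.le
    have hρmIcc : ρm ∈ Set.Icc (-1:ℝ) 1 := by
      constructor
      · rw [hρm_def, le_div_iff₀ hq'pos]; linarith [(abs_le.mp habs_am).1]
      · rw [hρm_def, div_le_one hq'pos]; exact (abs_le.mp habs_am).2
    have hsqm : Real.sqrt (1 - ρm ^ 2) = bm / q' := by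
      have h1' : 1 - ρm ^ 2 = (bm / q') ^ 2 := by
        have h0' : q' ^ 2 - am ^ 2 = bm ^ 2 := by linarith [hq'sq]
        have hq2 : (q' : ℝ) ^ 2 ≠ 0 := pow_ne_zero 2 hq'pos.ne'
        rw [hρm_def, div_pow, div_pow]
        calc 1 - am ^ 2 / q' ^ 2 = (q' ^ 2 - am ^ 2) / q' ^ 2 := by
              rw [sub_div, div_self hq2]
          _ = bm ^ 2 / q' ^ 2 := by rw [h0']
      rw [h1', Real.sqrt_sq (div_pos hbmp hq'pos).le]
    have hq'ρm : q' * ρm = am := by rw [hρm_def]; field_simp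
    have hq'sqm : q' * Real.sqrt (1 - ρm ^ 2) = bm := by rw [hsqm]; field_simp [hq'pos.ne']
    -- the midpoint pointwise bound
    have hptm : ∀ ω, (negp (am * S ω + bm * H ω - 1)) ^ 2 ≤
        (1/2 * |negp (a1 * S ω + b1 * H ω - 1)| + 1/2 * |negp (a2 * S ω + b2 * H ω - 1)|) ^ 2 := by
      intro ω
      have harg : am * S ω + bm * H ω - 1
          = ((a1 * S ω + b1 * H ω - 1) + (a2 * S ω + b2 * H ω - 1)) / 2 := by
        rw [ham, hbm]; ring
      rw [harg]
      exact negp_sq_midpoint _ _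
    -- integrability of the product of the absolute values
    have hu1m : Measurable (fun ω => negp (a1 * S ω + b1 * H ω - 1)) :=
      (((hSm.const_mul a1).add (hHm.const_mul b1)).sub measurable_const).min measurable_const
    have hu2m : Measurable (fun ω => negp (a2 * S ω + b2 * H ω - 1)) :=
      (((hSm.const_mul a2).add (hHm.const_mul b2)).sub measurable_const).min measurable_const
    have hprod : Integrable
        (fun ω => |negp (a1 * S ω + b1 * H ω - 1)| * |negp (a2 * S ω + b2 * H ω - 1)|) P := by
      refine Integrable.mono'
        (g := fun ω => (1/2) * ((negp (a1 * S ω + b1 * H ω - 1)) ^ 2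
          + (negp (a2 * S ω + b2 * H ω - 1)) ^ 2))
        (((hint a1 b1 1).add (hint a2 b2 1)).const_mul _)
        (hu1m.abs.mul hu2m.abs).aestronglyMeasurable (ae_of_all _ fun ω => ?_)
      rw [Real.norm_of_nonneg (by positivity)]
      show |negp (a1 * S ω + b1 * H ω - 1)| * |negp (a2 * S ω + b2 * H ω - 1)|
        ≤ (1/2) * ((negp (a1 * S ω + b1 * H ω - 1)) ^ 2 + (negp (a2 * S ω + b2 * H ω - 1)) ^ 2)
      exact abs_mul_abs_le_half _ _
    -- Cauchy-Schwarz via AM-GM with weight b2/b1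
    have hCS : (∫ ω, |negp (a1 * S ω + b1 * H ω - 1)| * |negp (a2 * S ω + b2 * H ω - 1)| ∂P)
        ≤ κ * b1 * b2 := by
      set lam := b2 / b1 with hlam_def
      have hlam : 0 < lam := div_pos hb2p hb1p
      have hpt : ∀ ω, |negp (a1 * S ω + b1 * H ω - 1)| * |negp (a2 * S ω + b2 * H ω - 1)|
          ≤ (1/2) * (lam * (negp (a1 * S ω + b1 * H ω - 1)) ^ 2
            + lam⁻¹ * (negp (a2 * S ω + b2 * H ω - 1)) ^ 2) :=
        fun ω => abs_mul_abs_le_weighted hlam _ _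
      calc (∫ ω, |negp (a1 * S ω + b1 * H ω - 1)| * |negp (a2 * S ω + b2 * H ω - 1)| ∂P)
          ≤ ∫ ω, (1/2) * (lam * (negp (a1 * S ω + b1 * H ω - 1)) ^ 2
              + lam⁻¹ * (negp (a2 * S ω + b2 * H ω - 1)) ^ 2) ∂P :=
            integral_mono hprod
              ((((hint a1 b1 1).const_mul lam).add
                ((hint a2 b2 1).const_mul lam⁻¹)).const_mul _) hpt
        _ = (1/2) * (lam * (κ * b1 ^ 2) + lam⁻¹ * (κ * b2 ^ 2)) := by
            rw [integral_const_mul, integral_add ((hint a1 b1 1).const_mul lam)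
              ((hint a2 b2 1).const_mul lam⁻¹), integral_const_mul, integral_const_mul, hJ1, hJ2]
        _ = κ * b1 * b2 := by
            rw [hlam_def]; field_simp; ring
    -- the midpoint integral bound
    have hexp : ∀ ω, (1/2 * |negp (a1 * S ω + b1 * H ω - 1)|
          + 1/2 * |negp (a2 * S ω + b2 * H ω - 1)|) ^ 2
        = (1/4) * (negp (a1 * S ω + b1 * H ω - 1)) ^ 2
          + (1/2) * (|negp (a1 * S ω + b1 * H ω - 1)| * |negp (a2 * S ω + b2 * H ω - 1)|)
          + (1/4) * (negp (a2 * S ω + b2 * H ω - 1)) ^ 2 := by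
      intro ω
      linear_combination (1/4 : ℝ) * sq_abs (negp (a1 * S ω + b1 * H ω - 1))
        + (1/4 : ℝ) * sq_abs (negp (a2 * S ω + b2 * H ω - 1))
    have hrhs_int : Integrable (fun ω => (1/2 * |negp (a1 * S ω + b1 * H ω - 1)|
        + 1/2 * |negp (a2 * S ω + b2 * H ω - 1)|) ^ 2) P := by
      rw [show (fun ω => (1/2 * |negp (a1 * S ω + b1 * H ω - 1)|
          + 1/2 * |negp (a2 * S ω + b2 * H ω - 1)|) ^ 2)
        = fun ω => (1/4) * (negp (a1 * S ω + b1 * H ω - 1)) ^ 2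
          + (1/2) * (|negp (a1 * S ω + b1 * H ω - 1)| * |negp (a2 * S ω + b2 * H ω - 1)|)
          + (1/4) * (negp (a2 * S ω + b2 * H ω - 1)) ^ 2 from funext hexp]
      exact (((hint a1 b1 1).const_mul _).add (hprod.const_mul _)).add
        ((hint a2 b2 1).const_mul _)
    have hJm : (∫ ω, (negp (am * S ω + bm * H ω - 1)) ^ 2 ∂P) ≤ κ * bm ^ 2 := by
      have h5 := integral_mono (hint am bm 1) hrhs_int hptm
      have h6 : (∫ ω, (1/2 * |negp (a1 * S ω + b1 * H ω - 1)|
            + 1/2 * |negp (a2 * S ω + b2 * H ω - 1)|) ^ 2 ∂P)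
          = (1/4) * (κ * b1 ^ 2)
            + (1/2) * (∫ ω, |negp (a1 * S ω + b1 * H ω - 1)|
                * |negp (a2 * S ω + b2 * H ω - 1)| ∂P)
            + (1/4) * (κ * b2 ^ 2) := by
        have hiC : Integrable (fun ω => (1/4) * (negp (a1 * S ω + b1 * H ω - 1)) ^ 2) P :=
          (hint a1 b1 1).const_mul (1/4)
        have hiD : Integrable (fun ω => (1/2) * (|negp (a1 * S ω + b1 * H ω - 1)|
            * |negp (a2 * S ω + b2 * H ω - 1)|)) P := hprod.const_mul (1/2)
        have hiA : Integrable (fun ω => (1/4) * (negp (a1 * S ω + b1 * H ω - 1)) ^ 2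
            + (1/2) * (|negp (a1 * S ω + b1 * H ω - 1)|
              * |negp (a2 * S ω + b2 * H ω - 1)|)) P := hiC.add hiD
        have hiB : Integrable (fun ω => (1/4) * (negp (a2 * S ω + b2 * H ω - 1)) ^ 2) P :=
          (hint a2 b2 1).const_mul (1/4)
        rw [integral_congr_ae (ae_of_all _ hexp)]
        rw [integral_add hiA hiB, integral_add hiC hiD,
          integral_const_mul, integral_const_mul, integral_const_mul, hJ1, hJ2]
      have h7 : κ * bm ^ 2 = (1/4) * (κ * b1 ^ 2) + (1/2) * (κ * b1 * b2)
          + (1/4) * (κ * b2 ^ 2) := by rw [hbm]; ring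
      linarith
    -- conclude: etaF at (q', ρm) vanishes
    have hEm : etaF P S H κ q' ρm ≤ 0 := by
      unfold etaF
      rw [hscale q' hq'pos ρm, hq'ρm, hq'sqm]
      have h7 : 1 - ρm ^ 2 = bm ^ 2 / q' ^ 2 := by
        have := hsqm
        rw [hρm_def, div_pow]
        rw [hρm_def, div_pow] at this
        field_simp
        linarith [hq'sq]
      rw [h7]
      have hq2 : (0:ℝ) < 1 / q' ^ 2 := one_div_pos.mpr (pow_pos hq'pos 2)
      have h8 := mul_le_mul_of_nonneg_left hJm hq2.le
      have h9 : 1 / q' ^ 2 * (κ * bm ^ 2) = bm ^ 2 / q' ^ 2 * κ := by ring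
      linarith
    have hge : 0 ≤ etaF P S H κ q' ρm :=
      le_trans (hnonnegstar ⟨ρm, hρmIcc⟩) (hmono q' hq'pos hlt.le ρm)
    have hInf0 : (⨅ ρ : Set.Icc (-1:ℝ) 1, etaF P S H κ q' ρ) = 0 := by
      apply le_antisymm
      · exact le_trans (ciInf_le (hBdd q') (⟨ρm, hρmIcc⟩ : Set.Icc (-1:ℝ) 1))
          (le_of_eq (le_antisymm hEm hge))
      · exact le_ciInf fun ρ => le_trans (hnonnegstar ρ) (hmono q' hq'pos hlt.le ρ)
    exact absurd (hquniq' q' hq'pos hInf0) (ne_of_lt hlt)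
  -- existence via compactness
  obtain ⟨ρ₀, hρ₀, hminOn⟩ := isCompact_Icc.exists_isMinOn (⟨0, by norm_num⟩ :
    (Set.Icc (-1:ℝ) 1).Nonempty) hcont.continuousOn
  have hmain : ∃! ρstar : ℝ, ρstar ∈ Set.Icc (-1:ℝ) 1 ∧
      ∀ ρ ∈ Set.Icc (-1:ℝ) 1, etaF P S H κ qstar ρstar ≤ etaF P S H κ qstar ρ := by
    refine ⟨ρ₀, ⟨hρ₀, fun ρ hρ => hminOn hρ⟩, ?_⟩
    rintro ρ₂ ⟨h2, hm2⟩
    exact huniq ρ₀ hρ₀ (fun ρ hρ => hminOn hρ) ρ₂ h2 hm2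
  exact hmain
end

section
/- Let ℓ(t) = log(1 + e^{−t}) be the logistic loss, and let α₁, α₂ > 0 and λ > 0. For Υ ∈ ℝ and i ∈ {1, 2}, denote by prox_{α_i ℓ(·/α_i)}(h + Υ_i x; λ) the proximal operator argmin_v { (1/(2λ))(h + Υ_i x − v)² + α_i ℓ(v/α_i) }. If (α₁, Υ₁) ≠ (α₂, Υ₂), then there exists (h, x) ∈ ℝ² such that α₂ · prox_{α₁ ℓ(·/α₁)}(h + Υ₁ x; λ) ≠ α₁ · prox_{α₂ ℓ(·/α₂)}(h + Υ₂ x; λ). -/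
open MeasureTheory Filter Set

/-- The logistic loss `ℓ(t) = log(1 + e^{−t})`. -/
noncomputable def logisticLoss (t : ℝ) : ℝ := Real.log (1 + Real.exp (-t))

/-- `v` is the proximal point `prox_g(x; λ)`, i.e. the minimizer of
`v ↦ (1/(2λ))(x − v)² + g(v)`. -/
def IsProxOf (g : ℝ → ℝ) (lam x v : ℝ) : Prop :=
  ∀ w : ℝ, (1 / (2 * lam)) * (x - v) ^ 2 + g v ≤ (1 / (2 * lam)) * (x - w) ^ 2 + g w

lemma prox_foc (lam α z v : ℝ) (hlam : 0 < lam) (hα : 0 < α)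
    (hv : IsProxOf (fun w => α * logisticLoss (w / α)) lam z v) :
    z = v - lam / (1 + Real.exp (v / α)) := by
  set f : ℝ → ℝ := fun w => (1 / (2 * lam)) * (z - w) ^ 2 + α * logisticLoss (w / α) with hf
  have hmin : IsLocalMin f v :=
    IsMinOn.isLocalMin (fun w _ => hv w) (Filter.univ_mem' (fun w => trivial))
  set E := Real.exp (-(v / α)) with hEdef
  have hE : (0:ℝ) < E := Real.exp_pos _
  have hα' : α ≠ 0 := ne_of_gt hα
  have hlam' : lam ≠ 0 := ne_of_gt hlam
  have h1E : (0:ℝ) < 1 + E := by positivity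
  have hd : HasDerivAt f ((1 / (2 * lam)) * (2 * (z - v) * (-1)) + α * (E * (-(1/α)) / (1 + E))) v := by
    have h1 : HasDerivAt (fun w : ℝ => (1 / (2 * lam)) * (z - w) ^ 2)
        ((1 / (2 * lam)) * (2 * (z - v) * (-1))) v := by
      have hb : HasDerivAt (fun w : ℝ => z - w) (-1) v := by
        simpa using (hasDerivAt_id v).const_sub z
      simpa using (hb.pow 2).const_mul (1 / (2 * lam))
    have h2 : HasDerivAt (fun w : ℝ => α * logisticLoss (w / α))
        (α * (E * (-(1/α)) / (1 + E))) v := by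
      have hb : HasDerivAt (fun w : ℝ => -(w / α)) (-(1/α)) v := by
        simpa [one_div] using ((hasDerivAt_id v).div_const α).fun_neg
      have hexp : HasDerivAt (fun w : ℝ => Real.exp (-(w / α))) (E * (-(1/α))) v :=
        (Real.hasDerivAt_exp _).comp v hb
      have hlog : HasDerivAt (fun w : ℝ => Real.log (1 + Real.exp (-(w / α))))
          (E * (-(1/α)) / (1 + E)) v := (hexp.const_add 1).log (ne_of_gt h1E)
      have heq : (fun w : ℝ => Real.log (1 + Real.exp (-(w / α)))) =
          fun w : ℝ => logisticLoss (w / α) := by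
        funext w; simp [logisticLoss]
      rw [heq] at hlog
      exact hlog.const_mul α
    exact h1.add h2
  have hzero := hmin.hasDerivAt_eq_zero hd
  have ha : α * (E * (-(1/α)) / (1 + E)) = -(E / (1 + E)) := by
    field_simp
  have hb : (1 / (2 * lam)) * (2 * (z - v) * (-1)) = (v - z) / lam := by
    field_simp; ring
  rw [ha, hb] at hzero
  have hkey : v - z = lam * (E / (1 + E)) := by
    have h1 : (v - z) / lam = E / (1 + E) := by linarith
    have h2 : (v - z) * (1 + E) = E * lam := by
      field_simp at h1; linarith [h1]
    rw [mul_div_assoc'] at *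
    rw [eq_div_iff (ne_of_gt h1E)]
    linear_combination h2
  have hEe : Real.exp (v / α) * E = 1 := by
    rw [hEdef, ← Real.exp_add]; simp
  have hT : (0:ℝ) < 1 + Real.exp (v / α) := by positivity
  have hfrac : E / (1 + E) = 1 / (1 + Real.exp (v / α)) := by
    rw [div_eq_div_iff (ne_of_gt h1E) (ne_of_gt hT)]
    have h3 : E * Real.exp (v / α) = 1 := by linear_combination hEe
    linear_combination h3
  rw [hfrac] at hkey
  have : lam * (1 / (1 + Real.exp (v / α))) = lam / (1 + Real.exp (v / α)) := by ring
  linarith [hkey, this]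

/-- if `(α₁, Υ₁) ≠ (α₂, Υ₂)` (with `α₁, α₂, λ > 0`), then there exists
`(h, x) ∈ ℝ²` such that
`α₂ · prox_{α₁ℓ(·/α₁)}(h + Υ₁x; λ) ≠ α₁ · prox_{α₂ℓ(·/α₂)}(h + Υ₂x; λ)`. -/
theorem prox_logistic_scaled_ne (lam α₁ α₂ Υ₁ Υ₂ : ℝ)
    (hlam : 0 < lam) (hα₁ : 0 < α₁) (hα₂ : 0 < α₂)
    (hne : (α₁, Υ₁) ≠ (α₂, Υ₂))
    (P₁ P₂ : ℝ → ℝ)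
    (hP₁ : ∀ z : ℝ, IsProxOf (fun v => α₁ * logisticLoss (v / α₁)) lam z (P₁ z))
    (hP₂ : ∀ z : ℝ, IsProxOf (fun v => α₂ * logisticLoss (v / α₂)) lam z (P₂ z)) :
    ∃ h x : ℝ, α₂ * P₁ (h + Υ₁ * x) ≠ α₁ * P₂ (h + Υ₂ * x) := by
  by_contra hcon
  push_neg at hcon
  have foc1 : ∀ z, z = P₁ z - lam / (1 + Real.exp (P₁ z / α₁)) :=
    fun z => prox_foc lam α₁ z (P₁ z) hlam hα₁ (hP₁ z)
  have foc2 : ∀ z, z = P₂ z - lam / (1 + Real.exp (P₂ z / α₂)) :=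
    fun z => prox_foc lam α₂ z (P₂ z) hlam hα₂ (hP₂ z)
  have hA : ∀ z, α₂ * P₁ z = α₁ * P₂ z := fun z => by simpa using hcon z 0
  have hinj1 : Function.Injective P₁ := by
    intro a b hab
    rw [foc1 a, foc1 b, hab]
  have hPP : ∀ z, P₁ z = P₂ z := by
    intro z
    have h1 := foc1 z
    have h2 := foc2 z
    have hw : P₂ z / α₂ = P₁ z / α₁ := by
      rw [div_eq_div_iff (ne_of_gt hα₂) (ne_of_gt hα₁)]
      linear_combination (-1 : ℝ) * hA z
    rw [hw] at h2
    linarith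
  have hαeq : α₁ = α₂ := by
    have h0 : P₁ 0 ≠ 0 := by
      intro h
      have hf := foc1 0
      rw [h] at hf
      simp [Real.exp_zero] at hf
      have : (1:ℝ) + 1 > 0 := by norm_num
      have : lam / (1 + 1) > 0 := by positivity
      linarith
    have hz := hA 0
    rw [← hPP 0] at hz
    exact (mul_right_cancel₀ h0 hz).symm
  have hΥ : Υ₁ = Υ₂ := by
    have hx := hcon 0 1
    simp only [zero_add, mul_one] at hx
    rw [← hPP (Υ₂), hαeq] at hx
    exact hinj1 (mul_left_cancel₀ (ne_of_gt hα₂) hx)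
  exact hne (by rw [hαeq, hΥ])
end
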